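/- arXiv:1806.05395 — 2 statements merged into one kernel-verified Lean document; each statement's English description precedes it below -/
import Mathlib

section
/- Let b be a radial magnetic field on the open unit disc and let q be a trajectory of b with q(0) in the open unit disc and q(0) ≠ 0. Assume hypothesis H1: liminf_{r→1⁻} |(1/2π)∫_{‖q(0)‖≤‖x‖≤r} b(x) dx − det(q(0), q̇(0))| > ‖q̇(0)‖. Then the maximal solution exists for all t ≥ 0 and there exists η ∈ [0,1) such that ‖q(t)‖ < η for all t ≥ 0. -/
open Filter MeasureTheory Set

/-- The planar determinant `det(u,v) = u₁v₂ − u₂v₁`, for `ℝ²` identified with `ℂ`. -/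
noncomputable def det2 (u v : ℂ) : ℝ := u.re * v.im - u.im * v.re

section AuxLemmas

open intervalIntegral Metric

lemma lipschitzOnWith_Icc_of_locally (β : ℝ → ℝ)
    (hβ : ∀ x ∈ Set.Ico (0:ℝ) 1, ∃ K : NNReal,
      ∃ u ∈ nhdsWithin x (Set.Ico (0:ℝ) 1), LipschitzOnWith K β u)
    {c : ℝ} (hc0 : 0 ≤ c) (hc1 : c < 1) :
    ∃ K : NNReal, LipschitzOnWith K β (Set.Icc 0 c) := by
  have hsub : Set.Icc (0:ℝ) c ⊆ Set.Ico 0 1 := fun x hx => ⟨hx.1, lt_of_le_of_lt hx.2 hc1⟩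
  have hchoice : ∀ i : ↥(Set.Icc (0:ℝ) c), ∃ K : NNReal, ∃ O : Set ℝ, IsOpen O ∧ (i:ℝ) ∈ O ∧
      LipschitzOnWith K β (O ∩ Set.Ico 0 1) := by
    intro i
    obtain ⟨K, u, hu, hL⟩ := hβ i (hsub i.2)
    obtain ⟨O, hO, hxO, hOsub⟩ := mem_nhdsWithin.mp hu
    exact ⟨K, O, hO, hxO, hL.mono hOsub⟩
  choose K O hOopen hxO hOL using hchoice
  have hcont : ContinuousOn β (Set.Icc 0 c) := by
    intro x hx
    have h1 : ContinuousWithinAt β (O ⟨x, hx⟩ ∩ Set.Ico 0 1) x :=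
      (hOL ⟨x, hx⟩).continuousOn x ⟨hxO _, hsub hx⟩
    refine h1.mono_of_mem_nhdsWithin ?_
    exact Filter.inter_mem (mem_nhdsWithin_of_mem_nhds ((hOopen _).mem_nhds (hxO _)))
      (Filter.mem_of_superset self_mem_nhdsWithin hsub)
  obtain ⟨B, hB⟩ := isCompact_Icc.exists_bound_of_continuousOn hcont
  have hB0 : 0 ≤ B := le_trans (norm_nonneg _) (hB 0 ⟨le_refl 0, hc0⟩)
  obtain ⟨F, hF⟩ := isCompact_Icc.elim_finite_subcover O hOopen
    (fun x hx => Set.mem_iUnion.mpr ⟨⟨x, hx⟩, hxO _⟩)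
  have hcov2 : Set.Icc (0:ℝ) c ⊆ ⋃ i : ↥F, O i := by
    intro x hx
    obtain ⟨i, hi, hxi⟩ := Set.mem_iUnion₂.mp (hF hx)
    exact Set.mem_iUnion.mpr ⟨⟨i, hi⟩, hxi⟩
  obtain ⟨δ, hδ, hleb⟩ := lebesgue_number_lemma_of_metric isCompact_Icc
    (fun i : ↥F => hOopen i) hcov2
  set K₁ : NNReal := F.sup (fun i => K i) with hK₁
  refine ⟨K₁ ⊔ Real.toNNReal (2 * B / δ), ?_⟩
  rw [lipschitzOnWith_iff_dist_le_mul]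
  intro x hx y hy
  rcases lt_or_ge (dist x y) δ with hlt | hge
  · obtain ⟨i, hball⟩ := hleb x hx
    have hxi : x ∈ O i ∩ Set.Ico 0 1 := ⟨hball (mem_ball_self hδ), hsub hx⟩
    have hyi : y ∈ O i ∩ Set.Ico 0 1 := ⟨hball (by simpa [mem_ball, dist_comm] using hlt), hsub hy⟩
    have := (lipschitzOnWith_iff_dist_le_mul.mp (hOL i)) x hxi y hyi
    refine le_trans this (mul_le_mul_of_nonneg_right ?_ dist_nonneg)
    have hle : K (i:↥(Set.Icc (0:ℝ) c)) ≤ K₁ := Finset.le_sup i.2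
    exact_mod_cast le_trans hle le_sup_left
  · have h1 : dist (β x) (β y) ≤ 2 * B := by
      have := hB x hx; have := hB y hy
      calc dist (β x) (β y) ≤ ‖β x‖ + ‖β y‖ := dist_le_norm_add_norm _ _
        _ ≤ 2 * B := by linarith [hB x hx, hB y hy]
    have h2 : 2 * B / δ * δ ≤ (2 * B / δ) * dist x y :=
      mul_le_mul_of_nonneg_left hge (by positivity)
    have h3 : 2 * B / δ * δ = 2 * B := by field_simp
    calc dist (β x) (β y) ≤ 2 * B := h1
      _ = 2 * B / δ * δ := h3.symm
      _ ≤ (2 * B / δ) * dist x y := h2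
      _ ≤ (↑(K₁ ⊔ Real.toNNReal (2 * B / δ))) * dist x y := by
          refine mul_le_mul_of_nonneg_right ?_ dist_nonneg
          refine le_trans (Real.le_coe_toNNReal _) ?_
          exact_mod_cast le_sup_right

noncomputable def trunc (M : ℝ) (v : ℂ) : ℂ := if ‖v‖ ≤ M then v else (M / ‖v‖) • v

lemma trunc_of_le {M : ℝ} {v : ℂ} (h : ‖v‖ ≤ M) : trunc M v = v := if_pos h

lemma trunc_eq_smul {M : ℝ} (hM : 0 ≤ M) (v : ℂ) :
    ∃ ρ : ℝ, 0 ≤ ρ ∧ trunc M v = ρ • v := by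
  unfold trunc
  split_ifs with h
  · exact ⟨1, zero_le_one, (one_smul ℝ v).symm⟩
  · exact ⟨M / ‖v‖, div_nonneg hM (norm_nonneg v), rfl⟩

lemma norm_trunc_le {M : ℝ} (hM : 0 ≤ M) (v : ℂ) : ‖trunc M v‖ ≤ M := by
  unfold trunc
  split_ifs with h
  · exact h
  · push_neg at h
    have hv : 0 < ‖v‖ := lt_of_le_of_lt hM h
    rw [norm_smul, Real.norm_eq_abs, abs_of_nonneg (div_nonneg hM hv.le), div_mul_cancel₀ _ hv.ne']

lemma trunc_mixed {M : ℝ} (hM : 0 < M) {v w : ℂ} (hv : ‖v‖ ≤ M) (hw : ¬ ‖w‖ ≤ M) :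
    ‖v - (M / ‖w‖) • w‖ ≤ 2 * ‖v - w‖ := by
  push_neg at hw
  have hbw : 0 < ‖w‖ := hM.trans hw
  have e1 : v - (M / ‖w‖) • w = (v - w) + (1 - M / ‖w‖) • w := by
    rw [sub_smul, one_smul]; abel
  have h2 : ‖(1 - M / ‖w‖) • w‖ = ‖w‖ - M := by
    rw [norm_smul, Real.norm_eq_abs, abs_of_nonneg, sub_mul, one_mul, div_mul_cancel₀ _ hbw.ne']
    rw [sub_nonneg]; exact (div_le_one hbw).mpr hw.le
  have h3 : ‖w‖ - M ≤ ‖w‖ - ‖v‖ := by linarith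
  have h4 : ‖w‖ - ‖v‖ ≤ ‖v - w‖ := by
    have := abs_norm_sub_norm_le w v
    rw [norm_sub_rev]; exact le_trans (le_abs_self _) this
  calc ‖v - (M / ‖w‖) • w‖ ≤ ‖v - w‖ + ‖(1 - M / ‖w‖) • w‖ := by rw [e1]; exact norm_add_le _ _
    _ ≤ 2 * ‖v - w‖ := by rw [h2]; linarith

lemma trunc_lip {M : ℝ} (hM : 0 < M) : LipschitzWith 2 (trunc M) := by
  refine LipschitzWith.of_dist_le_mul (fun v w => ?_)
  simp only [dist_eq_norm, NNReal.coe_ofNat]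
  unfold trunc
  split_ifs with h1 h2 h2
  · linarith [norm_nonneg (v - w)]
  · exact trunc_mixed hM h1 h2
  · rw [norm_sub_rev, norm_sub_rev (v:ℂ) w]; exact trunc_mixed hM h2 h1
  · push_neg at h1 h2
    have hav : 0 < ‖v‖ := hM.trans h1
    have haw : 0 < ‖w‖ := hM.trans h2
    have e1 : (M / ‖v‖) • v - (M / ‖w‖) • w
        = (M / ‖v‖) • (v - w) + (M / ‖v‖ - M / ‖w‖) • w := by
      rw [smul_sub, sub_smul]; abel
    have h3 : ‖(M / ‖v‖) • (v - w)‖ ≤ ‖v - w‖ := by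
      rw [norm_smul, Real.norm_eq_abs, abs_of_nonneg (by positivity)]
      nlinarith [norm_nonneg (v - w), (div_le_one hav).mpr h1.le]
    have h4 : ‖(M / ‖v‖ - M / ‖w‖) • w‖ ≤ ‖v - w‖ := by
      rw [norm_smul, Real.norm_eq_abs]
      have e2' : (M / ‖v‖ - M / ‖w‖) * ‖w‖ = M / ‖v‖ * (‖w‖ - ‖v‖) := by
        rw [sub_mul, mul_sub, div_mul_cancel₀ _ (ne_of_gt haw)]
        congr 1
        exact (div_mul_cancel₀ M (ne_of_gt hav)).symm
      have h5 : |‖w‖ - ‖v‖| ≤ ‖v - w‖ := by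
        rw [norm_sub_rev]; exact abs_norm_sub_norm_le w v
      calc |M / ‖v‖ - M / ‖w‖| * ‖w‖ = |(M / ‖v‖ - M / ‖w‖) * ‖w‖| := by
            rw [abs_mul, abs_of_nonneg (norm_nonneg w)]
        _ = |M / ‖v‖ * (‖w‖ - ‖v‖)| := by rw [e2']
        _ = (M / ‖v‖) * |‖w‖ - ‖v‖| := by
            rw [abs_mul, abs_of_nonneg (le_of_lt (by positivity : (0:ℝ) < M / ‖v‖))]
        _ ≤ 1 * ‖v - w‖ := by
            refine mul_le_mul ((div_le_one hav).mpr h1.le) h5 (abs_nonneg _) zero_le_one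
        _ = ‖v - w‖ := one_mul _
    calc ‖(M / ‖v‖) • v - (M / ‖w‖) • w‖
        ≤ ‖(M / ‖v‖) • (v - w)‖ + ‖(M / ‖v‖ - M / ‖w‖) • w‖ := by rw [e1]; exact norm_add_le _ _
      _ ≤ 2 * ‖v - w‖ := by linarith

lemma hasDerivAt_creal {f : ℝ → ℂ} {f' : ℂ} {t : ℝ} (h : HasDerivAt f f' t) :
    HasDerivAt (fun s => (f s).re) f'.re t :=
  (Complex.reCLM.hasFDerivAt.comp_hasDerivAt t h :)

lemma hasDerivAt_cimag {f : ℝ → ℂ} {f' : ℂ} {t : ℝ} (h : HasDerivAt f f' t) :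
    HasDerivAt (fun s => (f s).im) f'.im t :=
  (Complex.imCLM.hasFDerivAt.comp_hasDerivAt t h :)

lemma normSq_const_of_deriv {V : ℝ → ℂ} {e : ℝ → ℝ}
    (hV : ∀ t, HasDerivAt V (-Complex.I * (e t : ℂ) * V t) t) (t : ℝ) :
    Complex.normSq (V t) = Complex.normSq (V 0) := by
  have key : ∀ s, HasDerivAt (fun u => Complex.normSq (V u)) 0 s := by
    intro s
    have h1 := hasDerivAt_creal (hV s)
    have h2 := hasDerivAt_cimag (hV s)
    have h3 := (h1.mul h1).add (h2.mul h2)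
    have h0 : (-Complex.I * (e s : ℂ) * V s).re * (V s).re
        + (V s).re * (-Complex.I * (e s : ℂ) * V s).re
        + ((-Complex.I * (e s : ℂ) * V s).im * (V s).im
          + (V s).im * (-Complex.I * (e s : ℂ) * V s).im) = 0 := by
      simp [Complex.mul_re, Complex.mul_im]; ring
    rw [h0] at h3
    simpa only [Complex.normSq_apply, Pi.mul_def, Pi.add_def] using h3
  have hdiff : Differentiable ℝ (fun u => Complex.normSq (V u)) := fun s => (key s).differentiableAt
  exact is_const_of_deriv_eq_zero hdiff (fun s => (key s).deriv) t 0

lemma conservation {g : ℝ → ℝ} (hg : Continuous g) {q : ℝ → ℂ} {b : ℝ}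
    (hq1 : Differentiable ℝ q) (hq2 : Differentiable ℝ (deriv q))
    (hN : ∀ t ∈ Set.Icc (0:ℝ) b, deriv (deriv q) t
      = -Complex.I * (g (Complex.normSq (q t)) : ℂ) * deriv q t) :
    ∀ t ∈ Set.Icc (0:ℝ) b,
      Complex.normSq (deriv q t) = Complex.normSq (deriv q 0) ∧
      det2 (q t) (deriv q t) + (1/2) * (∫ σ in (0:ℝ)..(Complex.normSq (q t)), g σ)
        = det2 (q 0) (deriv q 0) + (1/2) * (∫ σ in (0:ℝ)..(Complex.normSq (q 0)), g σ) := by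
  have hx : ∀ s, HasDerivAt (fun u => (q u).re) ((deriv q s).re) s :=
    fun s => hasDerivAt_creal (hq1 s).hasDerivAt
  have hy : ∀ s, HasDerivAt (fun u => (q u).im) ((deriv q s).im) s :=
    fun s => hasDerivAt_cimag (hq1 s).hasDerivAt
  have hvx : ∀ s, HasDerivAt (fun u => (deriv q u).re) ((deriv (deriv q) s).re) s :=
    fun s => hasDerivAt_creal (hq2 s).hasDerivAt
  have hvy : ∀ s, HasDerivAt (fun u => (deriv q u).im) ((deriv (deriv q) s).im) s :=
    fun s => hasDerivAt_cimag (hq2 s).hasDerivAt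
  set H : ℝ → ℝ := fun s => ∫ σ in (0:ℝ)..s, g σ with hHdef
  have hH : ∀ s : ℝ, HasDerivAt H (g s) s := fun s => (hg.integral_hasStrictDerivAt 0 s).hasDerivAt
  have hE : ∀ s, HasDerivAt (fun u => Complex.normSq (deriv q u))
      ((deriv (deriv q) s).re * (deriv q s).re + (deriv q s).re * (deriv (deriv q) s).re
        + ((deriv (deriv q) s).im * (deriv q s).im + (deriv q s).im * (deriv (deriv q) s).im)) s := by
    intro s
    have h3 := ((hvx s).mul (hvx s)).add ((hvy s).mul (hvy s))
    simpa only [Complex.normSq_apply, Pi.mul_def, Pi.add_def] using h3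
  have hE0 : ∀ s ∈ Set.Ico (0:ℝ) b,
      HasDerivWithinAt (fun u => Complex.normSq (deriv q u)) 0 (Set.Ici s) s := by
    intro s hs
    have h := hE s
    rw [hN s ⟨hs.1, hs.2.le⟩] at h
    have h0 : (-Complex.I * (g (Complex.normSq (q s)) : ℂ) * deriv q s).re * (deriv q s).re
        + (deriv q s).re * (-Complex.I * (g (Complex.normSq (q s)) : ℂ) * deriv q s).re
        + ((-Complex.I * (g (Complex.normSq (q s)) : ℂ) * deriv q s).im * (deriv q s).im
          + (deriv q s).im * (-Complex.I * (g (Complex.normSq (q s)) : ℂ) * deriv q s).im) = 0 := by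
      simp [Complex.mul_re, Complex.mul_im]; ring
    rw [h0] at h
    exact h.hasDerivWithinAt
  have hnq : ∀ s, HasDerivAt (fun u => Complex.normSq (q u))
      ((deriv q s).re * (q s).re + (q s).re * (deriv q s).re
        + ((deriv q s).im * (q s).im + (q s).im * (deriv q s).im)) s := by
    intro s
    have h3 := ((hx s).mul (hx s)).add ((hy s).mul (hy s))
    simpa only [Complex.normSq_apply, Pi.mul_def, Pi.add_def] using h3
  have hL : ∀ s, HasDerivAt (fun u => det2 (q u) (deriv q u) + (1/2) * H (Complex.normSq (q u)))
      (((deriv q s).re * (deriv q s).im + (q s).re * (deriv (deriv q) s).im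
        - ((deriv q s).im * (deriv q s).re + (q s).im * (deriv (deriv q) s).re))
        + (1/2) * (g (Complex.normSq (q s)) * ((deriv q s).re * (q s).re + (q s).re * (deriv q s).re
        + ((deriv q s).im * (q s).im + (q s).im * (deriv q s).im)))) s := by
    intro s
    have hdet : HasDerivAt (fun u => det2 (q u) (deriv q u))
        ((deriv q s).re * (deriv q s).im + (q s).re * (deriv (deriv q) s).im
          - ((deriv q s).im * (deriv q s).re + (q s).im * (deriv (deriv q) s).re)) s := by
      have := ((hx s).mul (hvy s)).sub ((hy s).mul (hvx s))
      simpa only [det2, Pi.mul_def, Pi.sub_def] using this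
    have hcomp : HasDerivAt (fun u => H (Complex.normSq (q u)))
        (g (Complex.normSq (q s)) * ((deriv q s).re * (q s).re + (q s).re * (deriv q s).re
          + ((deriv q s).im * (q s).im + (q s).im * (deriv q s).im))) s :=
      by simpa only [Function.comp_def] using (hH (Complex.normSq (q s))).comp s (hnq s)
    exact hdet.add (hcomp.const_mul (1/2))
  have hL0 : ∀ s ∈ Set.Ico (0:ℝ) b, HasDerivWithinAt
      (fun u => det2 (q u) (deriv q u) + (1/2) * H (Complex.normSq (q u))) 0 (Set.Ici s) s := by
    intro s hs
    have h := hL s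
    rw [hN s ⟨hs.1, hs.2.le⟩] at h
    have h0 : ((deriv q s).re * (deriv q s).im
        + (q s).re * (-Complex.I * (g (Complex.normSq (q s)) : ℂ) * deriv q s).im
        - ((deriv q s).im * (deriv q s).re
        + (q s).im * (-Complex.I * (g (Complex.normSq (q s)) : ℂ) * deriv q s).re))
        + (1/2) * (g (Complex.normSq (q s)) * ((deriv q s).re * (q s).re + (q s).re * (deriv q s).re
        + ((deriv q s).im * (q s).im + (q s).im * (deriv q s).im))) = 0 := by
      simp [Complex.mul_re, Complex.mul_im]; ring
    rw [h0] at h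
    exact h.hasDerivWithinAt
  intro t ht
  constructor
  · exact constant_of_has_deriv_right_zero (f := fun u => Complex.normSq (deriv q u))
      (a := 0) (b := b) (fun s _ => ((hE s).differentiableAt.continuousAt.continuousWithinAt)) hE0 t ht
  · exact constant_of_has_deriv_right_zero
      (f := fun u => det2 (q u) (deriv q u) + (1/2) * H (Complex.normSq (q u)))
      (a := 0) (b := b) (fun s _ => ((hL s).differentiableAt.continuousAt.continuousWithinAt)) hL0 t ht

lemma abs_det2_le (u v : ℂ) : |det2 u v| ≤ ‖u‖ * ‖v‖ := by
  have h : det2 u v = ((starRingEnd ℂ) u * v).im := by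
    simp [det2, Complex.mul_im]
    ring
  rw [h]
  refine le_trans (Complex.abs_im_le_norm _) ?_
  rw [norm_mul, Complex.norm_conj]

lemma annulus_integral (β : ℝ → ℝ) {r0 r : ℝ} (h0 : 0 < r0) (hr : r0 ≤ r) :
    (∫ x in {x : ℂ | r0 ≤ ‖x‖ ∧ ‖x‖ ≤ r}, β ‖x‖) = 2 * Real.pi * ∫ y in r0..r, y * β y := by
  have hSeq : {x : ℂ | r0 ≤ ‖x‖ ∧ ‖x‖ ≤ r} = (fun x : ℂ => ‖x‖) ⁻¹' (Set.Icc r0 r) := by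
    ext x; simp [Set.mem_Icc]
  have hS : MeasurableSet {x : ℂ | r0 ≤ ‖x‖ ∧ ‖x‖ ≤ r} := by
    rw [hSeq]; exact (isClosed_Icc.preimage continuous_norm).measurableSet
  have h1 : (∫ x in {x : ℂ | r0 ≤ ‖x‖ ∧ ‖x‖ ≤ r}, β ‖x‖)
      = ∫ x : ℂ, (Set.indicator (Set.Icc r0 r) β) ‖x‖ := by
    rw [← MeasureTheory.integral_indicator hS]
    refine MeasureTheory.integral_congr_ae (Filter.Eventually.of_forall fun x => ?_)
    show Set.indicator {x : ℂ | r0 ≤ ‖x‖ ∧ ‖x‖ ≤ r} (fun x => β ‖x‖) x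
      = Set.indicator (Set.Icc r0 r) β ‖x‖
    by_cases hx : x ∈ {x : ℂ | r0 ≤ ‖x‖ ∧ ‖x‖ ≤ r}
    · rw [Set.indicator_of_mem hx,
        Set.indicator_of_mem (show ‖x‖ ∈ Set.Icc r0 r from ⟨hx.1, hx.2⟩)]
    · rw [Set.indicator_of_notMem hx,
        Set.indicator_of_notMem (show ‖x‖ ∉ Set.Icc r0 r from fun hc => hx ⟨hc.1, hc.2⟩)]
  rw [h1, MeasureTheory.integral_fun_norm_addHaar volume (Set.indicator (Set.Icc r0 r) β)]
  rw [Complex.finrank_real_complex]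
  have hball : volume.real (ball (0:ℂ) 1) = Real.pi := by
    rw [measureReal_def, Complex.volume_ball]
    simp [ENNReal.toReal_mul]
  rw [hball]
  have h2 : (∫ y in Set.Ioi (0:ℝ), y ^ (2 - 1) • (Set.indicator (Set.Icc r0 r) β) y)
      = ∫ y in r0..r, y * β y := by
    have hind : ∀ y : ℝ, y ^ (2 - 1) • (Set.indicator (Set.Icc r0 r) β) y
        = Set.indicator (Set.Icc r0 r) (fun y => y * β y) y := by
      intro y
      by_cases hy : y ∈ Set.Icc r0 r
      · rw [Set.indicator_of_mem hy, Set.indicator_of_mem hy]; simp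
      · rw [Set.indicator_of_notMem hy, Set.indicator_of_notMem hy]; simp
    simp_rw [hind]
    rw [MeasureTheory.setIntegral_indicator measurableSet_Icc]
    have : Set.Ioi (0:ℝ) ∩ Set.Icc r0 r = Set.Icc r0 r := by
      apply Set.inter_eq_self_of_subset_right
      intro y hy; exact lt_of_lt_of_le h0 hy.1
    rw [this, MeasureTheory.integral_Icc_eq_integral_Ioc, ← intervalIntegral.integral_of_le hr]
  rw [h2]
  simp only [nsmul_eq_mul, smul_eq_mul, Nat.cast_ofNat]
  ring

lemma subst_lemma {g : ℝ → ℝ} (hg : Continuous g) (a b : ℝ) :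
    ∫ y in a..b, y * g (y^2)
      = (1/2) * ((∫ σ in (0:ℝ)..(b^2), g σ) - ∫ σ in (0:ℝ)..(a^2), g σ) := by
  have h1 : ∫ y in a..b, (2*y) • g (y^2) = ∫ σ in (a^2)..(b^2), g σ := by
    have := intervalIntegral.integral_comp_smul_deriv (a := a) (b := b)
      (f := fun y => y^2) (f' := fun y => 2*y) (g := g)
      (fun x _ => by simpa using hasDerivAt_pow 2 x) (by fun_prop) hg
    simpa using this
  have h2 : ∫ σ in (a^2)..(b^2), g σ
      = (∫ σ in (0:ℝ)..(b^2), g σ) - ∫ σ in (0:ℝ)..(a^2), g σ :=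
    (intervalIntegral.integral_interval_sub_left
      (hg.intervalIntegrable _ _) (hg.intervalIntegrable _ _)).symm
  have h3 : ∫ y in a..b, (2*y) • g (y^2) = 2 * ∫ y in a..b, y * g (y^2) := by
    simp_rw [smul_eq_mul, mul_assoc]
    exact intervalIntegral.integral_const_mul 2 _
  rw [← h2, ← h1, h3]; ring

lemma global_solution {w : ℂ × ℂ → ℂ × ℂ} {K : NNReal} (hw : LipschitzWith K w)
    {C : ℝ} (hC : 0 < C) (hbound : ∀ p, ‖w p‖ ≤ C) (x₀ : ℂ × ℂ) :
    ∃ P : ℝ → ℂ × ℂ, P 0 = x₀ ∧ ∀ t, HasDerivAt P (w (P t)) t := by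
  have hn : ∀ n : ℕ, ∃ f : ℝ → ℂ × ℂ, f 0 = x₀ ∧
      ∀ t ∈ Set.Icc (-(n:ℝ)) n, HasDerivWithinAt f (w (f t)) (Set.Icc (-(n:ℝ)) n) t := by
    intro n
    have hPL : IsPicardLindelof (fun _ x => w x) (tmin := -(n:ℝ)) (tmax := n)
        ⟨0, neg_nonpos.mpr n.cast_nonneg, n.cast_nonneg⟩ x₀ (Real.toNNReal (C * n)) 0
        (Real.toNNReal C) K :=
      { lipschitzOnWith := fun t _ => LipschitzWith.lipschitzOnWith hw
        continuousOn := fun x _ => continuousOn_const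
        norm_le := fun t _ x _ => by rw [Real.coe_toNNReal _ hC.le]; exact hbound x
        mul_max_le := by
          rw [Real.coe_toNNReal _ hC.le, Real.coe_toNNReal _ (by positivity)]
          simp }
    obtain ⟨α, hα0, hα⟩ := hPL.exists_eq_forall_mem_Icc_hasDerivWithinAt₀
    exact ⟨α, hα0, hα⟩
  choose f hf0 hfd using hn
  have hfD : ∀ n : ℕ, ∀ t : ℝ, |t| < n → HasDerivAt (f n) (w (f n t)) t := by
    intro n t ht
    rw [abs_lt] at ht
    exact (hfd n t ⟨ht.1.le, ht.2.le⟩).hasDerivAt (Icc_mem_nhds ht.1 ht.2)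
  have hwneg : LipschitzWith K (fun p : ℂ × ℂ => -(w p)) := by
    refine LipschitzWith.of_dist_le_mul (fun x y => ?_)
    rw [dist_neg_neg]
    exact hw.dist_le_mul x y
  have huniq : ∀ n m : ℕ, ∀ t : ℝ, |t| < n → |t| < m → f n t = f m t := by
    intro n m t htn htm
    rcases le_or_gt 0 t with ht0 | ht0
    · have h1 : ∀ k : ℕ, |t| < k → ∀ s ∈ Set.Icc (0:ℝ) t, |s| < k := by
        intro k hk s hs
        rw [abs_lt]; rw [abs_of_nonneg ht0] at hk
        constructor
        · have h2 : (0:ℝ) ≤ s := hs.1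
          have h3 : (0:ℝ) ≤ (k:ℝ) := Nat.cast_nonneg k
          by_contra hcon
          push_neg at hcon
          have : (k:ℝ) ≤ 0 := by linarith
          have : t < 0 := by linarith [hs.2, hk]
          linarith
        · linarith [hs.2]
      have := ODE_solution_unique (v := fun _ (y : ℂ × ℂ) => w y) (K := K) (f := f n) (g := f m)
        (a := 0) (b := t) (fun _ => hw)
        (fun s hs => (hfD n s (h1 n htn s hs)).continuousAt.continuousWithinAt)
        (fun s hs => (hfD n s (h1 n htn s ⟨hs.1, hs.2.le⟩)).hasDerivWithinAt)
        (fun s hs => (hfD m s (h1 m htm s hs)).continuousAt.continuousWithinAt)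
        (fun s hs => (hfD m s (h1 m htm s ⟨hs.1, hs.2.le⟩)).hasDerivWithinAt)
        (by rw [hf0 n, hf0 m])
      exact this ⟨ht0, le_refl t⟩
    · have hgD : ∀ k : ℕ, ∀ s : ℝ, |s| < k →
          HasDerivAt (fun u => f k (-u)) (-(w (f k (-s)))) s := by
        intro k s hk
        have h := (hfD k (-s) (by rwa [abs_neg])).scomp s (hasDerivAt_neg s)
        simpa [Function.comp_def] using h
      have h1 : ∀ k : ℕ, |t| < k → ∀ s ∈ Set.Icc (0:ℝ) (-t), |s| < k := by
        intro k hk s hs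
        rw [abs_lt]; rw [abs_of_neg ht0] at hk
        have h2 : (0:ℝ) ≤ s := hs.1
        constructor
        · have h3 : (0:ℝ) < (k:ℝ) := lt_of_le_of_lt (neg_nonneg.mpr ht0.le) hk
          linarith
        · linarith [hs.2]
      have := ODE_solution_unique (v := fun _ (y : ℂ × ℂ) => -(w y)) (K := K)
        (f := fun u => f n (-u)) (g := fun u => f m (-u))
        (a := 0) (b := -t) (fun _ => hwneg)
        (fun s hs => (hgD n s (h1 n htn s hs)).continuousAt.continuousWithinAt)
        (fun s hs => (hgD n s (h1 n htn s ⟨hs.1, hs.2.le⟩)).hasDerivWithinAt)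
        (fun s hs => (hgD m s (h1 m htm s hs)).continuousAt.continuousWithinAt)
        (fun s hs => (hgD m s (h1 m htm s ⟨hs.1, hs.2.le⟩)).hasDerivWithinAt)
        (by simp [hf0 n, hf0 m])
      have h2 := this ⟨neg_nonneg.mpr ht0.le, le_refl _⟩
      simpa using h2
  refine ⟨fun t => f (⌊|t|⌋₊ + 1) t, hf0 _, ?_⟩
  intro t
  set n : ℕ := ⌊|t|⌋₊ + 1 with hn
  have htn : |t| < n := by
    rw [hn]; push_cast; exact Nat.lt_floor_add_one |t|
  have heq : ∀ s ∈ Set.Ioo (-(n:ℝ)) n, f (⌊|s|⌋₊ + 1) s = f n s := by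
    intro s hs
    refine huniq _ _ s ?_ (abs_lt.mpr ⟨hs.1, hs.2⟩)
    push_cast; exact Nat.lt_floor_add_one |s|
  have hev : (fun s => f (⌊|s|⌋₊ + 1) s) =ᶠ[nhds t] f n :=
    Filter.eventuallyEq_of_mem (isOpen_Ioo.mem_nhds (abs_lt.mp htn |> fun h => ⟨h.1, h.2⟩)) heq
  have hD := hfD n t htn
  have hfin := hD.congr_of_eventuallyEq hev
  rwa [← heq t (by rcases abs_lt.mp htn with ⟨h1, h2⟩; exact ⟨h1, h2⟩)] at hfin

end AuxLemmas
/-- Let `b(q) = β(‖q‖)` be a radial magnetic field on the open unit disc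
(`β` locally Lipschitz on `[0,1)`) and let `q` be a trajectory of `b` (a `C²` solution
of Newton's equation `q̈ = −i·b(q)·q̇`) with `q(0)` in the open unit disc, `q(0) ≠ 0`.
Assume H1:
`liminf_{r→1⁻} |(1/2π)∫_{‖q(0)‖≤‖x‖≤r} b(x)dx − det(q(0),q̇(0))| > ‖q̇(0)‖`.
Then the maximal solution exists for all `t ≥ 0` and there is `η ∈ [0,1)` such that
`‖q(t)‖ < η` for all `t ≥ 0`: for the given trajectory on `[0,T)` we have `‖q t‖ < η`,
and there is a globally defined trajectory `Q` with the same initial data confined in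
the ball of radius `η`. -/
theorem confinement_H1
    (β : ℝ → ℝ)
    (hβ : ∀ x ∈ Set.Ico (0:ℝ) 1, ∃ K : NNReal,
      ∃ u ∈ nhdsWithin x (Set.Ico (0:ℝ) 1), LipschitzOnWith K β u)
    (q : ℝ → ℂ) (T : ℝ) (hT : 0 < T)
    (hsmooth : ContDiff ℝ 2 q)
    (hNewton : ∀ t ∈ Set.Ico (0:ℝ) T, deriv (deriv q) t = -Complex.I * (β ‖q t‖ : ℂ) * deriv q t)
    (hin : ∀ t ∈ Set.Ico (0:ℝ) T, ‖q t‖ < 1)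
    (h0ne : q 0 ≠ 0)
    (hH1 : (‖deriv q 0‖ : EReal) <
      Filter.liminf (fun r : ℝ =>
        ((|(1 / (2 * Real.pi)) * (∫ x in {x : ℂ | ‖q 0‖ ≤ ‖x‖ ∧ ‖x‖ ≤ r}, β ‖x‖)
          - det2 (q 0) (deriv q 0)| : ℝ) : EReal)) (nhdsWithin 1 (Set.Iio 1))) :
    ∃ η ∈ Set.Ico (0:ℝ) 1,
      (∀ t ∈ Set.Ico (0:ℝ) T, ‖q t‖ < η) ∧
      ∃ Q : ℝ → ℂ, ContDiff ℝ 2 Q ∧ Q 0 = q 0 ∧ deriv Q 0 = deriv q 0 ∧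
        ∀ t ∈ Set.Ici (0:ℝ),
          deriv (deriv Q) t = -Complex.I * (β ‖Q t‖ : ℂ) * deriv Q t ∧ ‖Q t‖ < η := by
  -- basic data
  have hr0pos : (0:ℝ) < ‖q 0‖ := norm_pos_iff.mpr h0ne
  have hr0lt1 : ‖q 0‖ < 1 := hin 0 ⟨le_refl 0, hT⟩
  set r0 : ℝ := ‖q 0‖ with hr0def
  -- differentiability of q
  have hsmooth' : ContDiff ℝ ((1:WithTop ℕ∞) + 1) q := by
    rw [one_add_one_eq_two]
    exact hsmooth
  have hq1 : Differentiable ℝ q := hsmooth.differentiable (by norm_num)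
  have hq2 : Differentiable ℝ (deriv q) := by
    rw [contDiff_succ_iff_deriv] at hsmooth'
    exact hsmooth'.2.2.differentiable (by norm_num)
  -- liminf extraction
  have hbasic : ∀ᶠ r in nhdsWithin (1:ℝ) (Set.Iio 1), (‖deriv q 0‖ : EReal) <
      ((|(1 / (2 * Real.pi)) * (∫ x in {x : ℂ | r0 ≤ ‖x‖ ∧ ‖x‖ ≤ r}, β ‖x‖)
        - det2 (q 0) (deriv q 0)| : ℝ) : EReal) :=
    Filter.eventually_lt_of_lt_liminf hH1
  obtain ⟨η₀, hη₀lt, hIoo⟩ := mem_nhdsLT_iff_exists_Ioo_subset.mp hbasic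
  have key : ∀ r ∈ Set.Ioo η₀ 1, ‖deriv q 0‖ <
      |(1 / (2 * Real.pi)) * (∫ x in {x : ℂ | r0 ≤ ‖x‖ ∧ ‖x‖ ≤ r}, β ‖x‖)
        - det2 (q 0) (deriv q 0)| := by
    intro r hr
    have := hIoo hr
    exact_mod_cast this
  -- constants
  set η₁ : ℝ := max ((η₀+1)/2) ((r0+1)/2) with hη₁def
  have hη₀lt1 : η₀ < 1 := hη₀lt
  have hη₁lt1 : η₁ < 1 := by
    rw [hη₁def]
    exact max_lt (by linarith) (by linarith)
  have hη₁gtη₀ : η₀ < η₁ := lt_of_lt_of_le (by linarith : η₀ < (η₀+1)/2) (le_max_left _ _)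
  have hr0ltη₁ : r0 < η₁ := lt_of_lt_of_le (by linarith : r0 < (r0+1)/2) (le_max_right _ _)
  have hη₁pos : 0 < η₁ := lt_trans hr0pos hr0ltη₁
  set η₂ : ℝ := (η₁+1)/2 with hη₂def
  have hη₁ltη₂ : η₁ < η₂ := by rw [hη₂def]; linarith
  have hη₂lt1 : η₂ < 1 := by rw [hη₂def]; linarith
  have hη₂pos : 0 < η₂ := lt_trans hη₁pos hη₁ltη₂
  obtain ⟨K, hK⟩ := lipschitzOnWith_Icc_of_locally β hβ hη₂pos.le hη₂lt1
  have hβcont : ContinuousOn β (Set.Icc 0 η₂) := hK.continuousOn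
  -- clamped field
  set clamp : ℝ → ℝ := fun r => max 0 (min r η₂) with hclampdef
  have hclampcont : Continuous clamp := by fun_prop
  have hclampmem : ∀ r, clamp r ∈ Set.Icc 0 η₂ := fun r =>
    ⟨le_max_left _ _, max_le hη₂pos.le (min_le_right _ _)⟩
  have hclampeq : ∀ r ∈ Set.Icc 0 η₂, clamp r = r := by
    intro r hr
    rw [hclampdef]
    simp only [min_eq_left hr.2, max_eq_right hr.1]
  set tβ : ℝ → ℝ := fun r => β (clamp r) with htβdef
  have htβcont : Continuous tβ := hβcont.comp_continuous hclampcont hclampmem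
  have htβeq : ∀ r ∈ Set.Icc 0 η₂, tβ r = β r := fun r hr => by
    rw [htβdef]; simp only [hclampeq r hr]
  set g : ℝ → ℝ := fun σ => tβ (Real.sqrt σ) with hgdef
  have hgcont : Continuous g := htβcont.comp Real.continuous_sqrt
  have hgnorm : ∀ z : ℂ, g (Complex.normSq z) = tβ ‖z‖ := by
    intro z
    rw [hgdef]
    rw [Complex.norm_def]
  -- the core "no escape" step
  have main_step : ∀ (Q : ℝ → ℂ) (t₁ : ℝ), 0 ≤ t₁ →
      Differentiable ℝ Q → Differentiable ℝ (deriv Q) →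
      (∀ s ∈ Set.Icc (0:ℝ) t₁, deriv (deriv Q) s
        = -Complex.I * (g (Complex.normSq (Q s)) : ℂ) * deriv Q s) →
      Q 0 = q 0 → deriv Q 0 = deriv q 0 → ‖Q t₁‖ = η₁ → False := by
    intro Q t₁ ht₁ hd1 hd2 hNg hQ0 hQ'0 hend
    obtain ⟨hEn, hLcons⟩ := conservation hgcont hd1 hd2 hNg t₁ ⟨ht₁, le_refl t₁⟩
    rw [hQ0, hQ'0] at hLcons
    rw [hQ'0] at hEn
    -- norms from normSq
    have hnormV : ‖deriv Q t₁‖ = ‖deriv q 0‖ := by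
      rw [Complex.norm_def, Complex.norm_def, hEn]
    have hsq1 : Complex.normSq (Q t₁) = η₁^2 := by
      rw [Complex.normSq_eq_norm_sq, hend]
    have hsq0 : Complex.normSq (q 0) = r0^2 := by
      rw [Complex.normSq_eq_norm_sq]
    rw [hsq1, hsq0] at hLcons
    -- annulus integral value at η₁
    have hann := annulus_integral β hr0pos hr0ltη₁.le
    have hcongr : (∫ y in r0..η₁, y * β y) = ∫ y in r0..η₁, y * g (y^2) := by
      apply intervalIntegral.integral_congr
      intro y hy
      rw [Set.uIcc_of_le hr0ltη₁.le] at hy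
      have hy2 : y ∈ Set.Icc (0:ℝ) η₂ := ⟨le_trans hr0pos.le hy.1, le_trans hy.2 hη₁ltη₂.le⟩
      have hgy : g (y^2) = tβ y := by
        show tβ (Real.sqrt (y^2)) = tβ y
        rw [Real.sqrt_sq hy2.1]
      show y * β y = y * g (y^2)
      rw [hgy, htβeq y hy2]
    have hsub := subst_lemma hgcont r0 η₁
    -- compute the H1 quantity at η₁
    have hπ : Real.pi ≠ 0 := Real.pi_ne_zero
    have hval : (1 / (2 * Real.pi)) * (∫ x in {x : ℂ | r0 ≤ ‖x‖ ∧ ‖x‖ ≤ η₁}, β ‖x‖)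
        - det2 (q 0) (deriv q 0) = -(det2 (Q t₁) (deriv Q t₁)) := by
      rw [hann, hcongr, hsub]
      have : (1 / (2 * Real.pi)) * (2 * Real.pi *
          ((1/2) * ((∫ σ in (0:ℝ)..(η₁^2), g σ) - ∫ σ in (0:ℝ)..(r0^2), g σ)))
          = (1/2) * ((∫ σ in (0:ℝ)..(η₁^2), g σ) - ∫ σ in (0:ℝ)..(r0^2), g σ) := by
        field_simp
      rw [this]
      linarith [hLcons]
    have hkey := key η₁ ⟨hη₁gtη₀, hη₁lt1⟩
    rw [hval, abs_neg] at hkey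
    have hbound := abs_det2_le (Q t₁) (deriv Q t₁)
    rw [hend, hnormV] at hbound
    nlinarith [norm_nonneg (deriv q 0)]
  -- reaching lemma
  have reach : ∀ (f : ℝ → ℂ), Continuous f → ‖f 0‖ < η₁ → ∀ t₀, 0 ≤ t₀ → η₁ ≤ ‖f t₀‖ →
      ∃ t₁, 0 < t₁ ∧ t₁ ≤ t₀ ∧ ‖f t₁‖ = η₁ ∧ ∀ s, 0 ≤ s → s ≤ t₁ → ‖f s‖ ≤ η₁ := by
    intro f hf hf0 t₀ ht₀0 ht₀
    set S := {t : ℝ | t ∈ Set.Icc 0 t₀ ∧ η₁ ≤ ‖f t‖} with hSdef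
    have hSclosed : IsClosed S := IsClosed.inter isClosed_Icc (isClosed_le continuous_const hf.norm)
    have hSne : S.Nonempty := ⟨t₀, ⟨⟨ht₀0, le_refl _⟩, ht₀⟩⟩
    have hSbdd : BddBelow S := ⟨0, fun s hs => hs.1.1⟩
    set t₁ := sInf S with ht₁def
    have ht₁S : t₁ ∈ S := hSclosed.csInf_mem hSne hSbdd
    have hlt : ∀ s, 0 ≤ s → s < t₁ → ‖f s‖ < η₁ := by
      intro s h0s hst
      by_contra h
      push_neg at h
      have hsS : s ∈ S := ⟨⟨h0s, le_trans hst.le ht₁S.1.2⟩, h⟩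
      exact absurd (csInf_le hSbdd hsS) (not_le.mpr hst)
    have ht₁pos : 0 < t₁ := by
      rcases lt_or_eq_of_le ht₁S.1.1 with h | h
      · exact h
      · exfalso; rw [← h] at ht₁S; exact absurd ht₁S.2 (not_le.mpr hf0)
    have hle : ‖f t₁‖ ≤ η₁ := by
      have htd : Filter.Tendsto (fun s => ‖f s‖) (nhdsWithin t₁ (Set.Iio t₁)) (nhds ‖f t₁‖) :=
        ((hf.norm.tendsto t₁).mono_left nhdsWithin_le_nhds)
      refine le_of_tendsto htd ?_
      filter_upwards [Ioo_mem_nhdsLT_of_mem (show t₁ ∈ Set.Ioc 0 t₁ from ⟨ht₁pos, le_refl _⟩)]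
        with s hs
      exact (hlt s hs.1.le hs.2).le
    have heq : ‖f t₁‖ = η₁ := le_antisymm hle ht₁S.2
    refine ⟨t₁, ht₁pos, ht₁S.1.2, heq, ?_⟩
    intro s h0s hs
    rcases lt_or_eq_of_le hs with h | h
    · exact (hlt s h0s h).le
    · rw [h, heq]
  -- Part A : the given trajectory stays below η₁
  have partA : ∀ t ∈ Set.Ico (0:ℝ) T, ‖q t‖ < η₁ := by
    by_contra hcon
    push_neg at hcon
    obtain ⟨t₀, ht₀, hget₀⟩ := hcon
    obtain ⟨t₁, ht₁pos, ht₁le, ht₁eq, ht₁all⟩ := reach q hq1.continuous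
      (by rw [← hr0def]; exact hr0ltη₁) t₀ ht₀.1 hget₀
    refine main_step q t₁ ht₁pos.le hq1 hq2 ?_ rfl rfl ht₁eq
    intro s hs
    have hsT : s ∈ Set.Ico (0:ℝ) T := ⟨hs.1, lt_of_le_of_lt (le_trans hs.2 ht₁le) ht₀.2⟩
    rw [hNewton s hsT]
    have hb : ‖q s‖ ∈ Set.Icc (0:ℝ) η₂ :=
      ⟨norm_nonneg _, le_trans (ht₁all s hs.1 hs.2) hη₁ltη₂.le⟩
    rw [hgnorm, htβeq _ hb]
  -- Part B : the global trajectory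
  set M : ℝ := ‖deriv q 0‖ + 1 with hMdef
  have hM0 : 0 < M := by positivity
  -- bound for tβ
  set B : ℝ := |β 0| + K * η₂ with hBdef
  have hβbd : ∀ x ∈ Set.Icc (0:ℝ) η₂, |β x| ≤ B := by
    intro x hx
    have h1 := (lipschitzOnWith_iff_dist_le_mul.mp hK) x hx 0 ⟨le_refl 0, hη₂pos.le⟩
    rw [Real.dist_eq, Real.dist_eq, sub_zero] at h1
    have h2 : |β x| ≤ |β x - β 0| + |β 0| := by
      calc |β x| = |(β x - β 0) + β 0| := by ring_nf
        _ ≤ |β x - β 0| + |β 0| := abs_add_le _ _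
    have h3 : |x| ≤ η₂ := abs_le.mpr ⟨by linarith [hx.1, hη₂pos.le], hx.2⟩
    have h4 : (K:ℝ) * |x| ≤ K * η₂ := mul_le_mul_of_nonneg_left h3 K.coe_nonneg
    rw [hBdef]; linarith
  have htβbd : ∀ r : ℝ, |tβ r| ≤ B := fun r => hβbd _ (hclampmem r)
  have hB0 : 0 ≤ B := le_trans (abs_nonneg _) (htβbd 0)
  -- clamp and tβ are Lipschitz
  have hclamplip : ∀ r r' : ℝ, |clamp r - clamp r'| ≤ |r - r'| := by
    intro r r'
    show |max 0 (min r η₂) - max 0 (min r' η₂)| ≤ |r - r'|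
    rw [max_comm (0:ℝ) (min r η₂), max_comm (0:ℝ) (min r' η₂)]
    refine le_trans (abs_max_sub_max_le_abs _ _ _) ?_
    refine le_trans (abs_min_sub_min_le_max r η₂ r' η₂) ?_
    simp
  have htβlip : ∀ r r' : ℝ, |tβ r - tβ r'| ≤ K * |r - r'| := by
    intro r r'
    have h1 := (lipschitzOnWith_iff_dist_le_mul.mp hK) _ (hclampmem r) _ (hclampmem r')
    rw [Real.dist_eq, Real.dist_eq] at h1
    exact le_trans h1 (mul_le_mul_of_nonneg_left (hclamplip r r') K.coe_nonneg)
  -- the vector field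
  set w : ℂ × ℂ → ℂ × ℂ :=
    fun p => (trunc M p.2, -Complex.I * (tβ ‖p.1‖ : ℂ) * trunc M p.2) with hwdef
  have htrdist : ∀ v v' : ℂ, dist (trunc M v) (trunc M v') ≤ 2 * dist v v' := by
    intro v v'
    have := (trunc_lip hM0).dist_le_mul v v'
    simpa using this
  have hwlip : LipschitzWith (Real.toNNReal (2 + 2*B + M*K)) w := by
    refine LipschitzWith.of_dist_le_mul (fun p p' => ?_)
    have hcoe : ((Real.toNNReal (2 + 2*B + M*K) : NNReal) : ℝ) = 2 + 2*B + M*K :=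
      Real.coe_toNNReal _ (by positivity)
    rw [hcoe]
    have hdp2 : dist p.2 p'.2 ≤ dist p p' := by
      rw [Prod.dist_eq]; exact le_max_right _ _
    have hdp1 : dist p.1 p'.1 ≤ dist p p' := by
      rw [Prod.dist_eq]; exact le_max_left _ _
    have hd1 : dist (trunc M p.2) (trunc M p'.2) ≤ 2 * dist p p' :=
      le_trans (htrdist _ _) (by linarith [dist_nonneg (x := p.2) (y := p'.2)])
    have hd2 : dist (-Complex.I * (tβ ‖p.1‖ : ℂ) * trunc M p.2)
        (-Complex.I * (tβ ‖p'.1‖ : ℂ) * trunc M p'.2) ≤ (2*B + M*K) * dist p p' := by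
      rw [dist_eq_norm]
      have he : -Complex.I * (tβ ‖p.1‖ : ℂ) * trunc M p.2
          - -Complex.I * (tβ ‖p'.1‖ : ℂ) * trunc M p'.2
          = -Complex.I * ((tβ ‖p.1‖ : ℂ) * (trunc M p.2 - trunc M p'.2)
            + ((tβ ‖p.1‖ : ℂ) - (tβ ‖p'.1‖ : ℂ)) * trunc M p'.2) := by ring
      rw [he, norm_mul, norm_neg, Complex.norm_I, one_mul]
      have hb1 : ‖(tβ ‖p.1‖ : ℂ) * (trunc M p.2 - trunc M p'.2)‖ ≤ B * (2 * dist p p') := by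
        rw [norm_mul, Complex.norm_real, Real.norm_eq_abs]
        refine mul_le_mul (htβbd _) ?_ (norm_nonneg _) hB0
        rw [← dist_eq_norm]
        exact le_trans (htrdist _ _) (by linarith [dist_nonneg (x := p.2) (y := p'.2)])
      have hb2 : ‖((tβ ‖p.1‖ : ℂ) - (tβ ‖p'.1‖ : ℂ)) * trunc M p'.2‖ ≤ (K * dist p p') * M := by
        rw [norm_mul]
        have h1 : ‖(tβ ‖p.1‖ : ℂ) - (tβ ‖p'.1‖ : ℂ)‖ = |tβ ‖p.1‖ - tβ ‖p'.1‖| := by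
          rw [← Complex.ofReal_sub, Complex.norm_real, Real.norm_eq_abs]
        rw [h1]
        refine mul_le_mul ?_ (norm_trunc_le hM0.le _) (norm_nonneg _) (by positivity)
        refine le_trans (htβlip _ _) (mul_le_mul_of_nonneg_left ?_ K.coe_nonneg)
        refine le_trans (abs_norm_sub_norm_le _ _) ?_
        rw [← dist_eq_norm]
        exact hdp1
      calc ‖(tβ ‖p.1‖ : ℂ) * (trunc M p.2 - trunc M p'.2)
            + ((tβ ‖p.1‖ : ℂ) - (tβ ‖p'.1‖ : ℂ)) * trunc M p'.2‖
          ≤ ‖(tβ ‖p.1‖ : ℂ) * (trunc M p.2 - trunc M p'.2)‖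
            + ‖((tβ ‖p.1‖ : ℂ) - (tβ ‖p'.1‖ : ℂ)) * trunc M p'.2‖ := norm_add_le _ _
        _ ≤ B * (2 * dist p p') + (K * dist p p') * M := add_le_add hb1 hb2
        _ = (2*B + M*K) * dist p p' := by ring
    have hfinal : dist (w p) (w p') = max (dist (trunc M p.2) (trunc M p'.2))
        (dist (-Complex.I * (tβ ‖p.1‖ : ℂ) * trunc M p.2)
          (-Complex.I * (tβ ‖p'.1‖ : ℂ) * trunc M p'.2)) := by
      rw [hwdef]; exact Prod.dist_eq
    rw [hfinal]
    have hd0 : 0 ≤ dist p p' := dist_nonneg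
    have hc2 : 0 ≤ M * (K:ℝ) := mul_nonneg hM0.le K.coe_nonneg
    have hexp : (2 + 2*B + M*(K:ℝ)) * dist p p'
        = 2 * dist p p' + (2*B + M*(K:ℝ)) * dist p p' := by ring
    have hc3 : 0 ≤ (2*B + M*(K:ℝ)) * dist p p' :=
      mul_nonneg (by linarith) hd0
    have hc4 : 0 ≤ 2 * dist p p' := by linarith
    refine max_le ?_ ?_
    · refine le_trans hd1 ?_
      rw [hexp]; linarith
    · refine le_trans hd2 ?_
      rw [hexp]; linarith
  have hwbound : ∀ p, ‖w p‖ ≤ M * (B + 1) := by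
    intro p
    have h1 : ‖w p‖ = max ‖trunc M p.2‖ ‖-Complex.I * (tβ ‖p.1‖ : ℂ) * trunc M p.2‖ := by
      rw [hwdef]; exact Prod.norm_def _
    rw [h1]
    have hexp : M * (B + 1) = M * B + M := by ring
    have hMB : 0 ≤ M * B := mul_nonneg hM0.le hB0
    refine max_le ?_ ?_
    · refine le_trans (norm_trunc_le hM0.le _) ?_
      rw [hexp]; linarith
    · rw [norm_mul, norm_mul, norm_neg, Complex.norm_I, one_mul, Complex.norm_real,
        Real.norm_eq_abs]
      calc |tβ ‖p.1‖| * ‖trunc M p.2‖ ≤ B * M :=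
            mul_le_mul (htβbd _) (norm_trunc_le hM0.le _) (norm_nonneg _) hB0
        _ = M * B := mul_comm _ _
        _ ≤ M * (B + 1) := by rw [hexp]; linarith
  obtain ⟨P, hP0, hPD⟩ := global_solution hwlip (by positivity) hwbound (q 0, deriv q 0)
  set Q : ℝ → ℂ := fun t => (P t).1 with hQdef
  set V : ℝ → ℂ := fun t => (P t).2 with hVdef
  have hQD : ∀ t, HasDerivAt Q (trunc M (V t)) t := by
    intro t
    exact ((ContinuousLinearMap.fst ℝ ℂ ℂ).hasFDerivAt.comp_hasDerivAt t (hPD t) :)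
  have hVD : ∀ t, HasDerivAt V (-Complex.I * (tβ ‖Q t‖ : ℂ) * trunc M (V t)) t := by
    intro t
    exact ((ContinuousLinearMap.snd ℝ ℂ ℂ).hasFDerivAt.comp_hasDerivAt t (hPD t) :)
  -- energy conservation for V
  choose ρ hρ0 hρeq using fun v : ℂ => trunc_eq_smul hM0.le v
  have hVD' : ∀ t, HasDerivAt V (-Complex.I * ((tβ ‖Q t‖ * ρ (V t) : ℝ) : ℂ) * V t) t := by
    intro t
    have h := hVD t
    rw [hρeq (V t)] at h
    convert h using 1
    rw [Complex.real_smul]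
    push_cast
    ring
  have hVnormSq : ∀ t, Complex.normSq (V t) = Complex.normSq (V 0) := fun t =>
    normSq_const_of_deriv hVD' t
  have hV0 : V 0 = deriv q 0 := by rw [hVdef]; simp only [hP0]
  have hQ0 : Q 0 = q 0 := by rw [hQdef]; simp only [hP0]
  have hVnorm : ∀ t, ‖V t‖ = ‖deriv q 0‖ := by
    intro t
    have h := hVnormSq t
    rw [hV0] at h
    rw [Complex.norm_def, Complex.norm_def, h]
  have htr : ∀ t, trunc M (V t) = V t := by
    intro t
    refine trunc_of_le ?_
    rw [hVnorm t, hMdef]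
    linarith
  have hQD' : ∀ t, HasDerivAt Q (V t) t := fun t => htr t ▸ hQD t
  have hderivQ : deriv Q = V := funext fun t => (hQD' t).deriv
  have hQdiff : Differentiable ℝ Q := fun t => (hQD' t).differentiableAt
  have hVdiff : Differentiable ℝ V := fun t => (hVD' t).differentiableAt
  have hVD'' : ∀ t, HasDerivAt V (-Complex.I * (tβ ‖Q t‖ : ℂ) * V t) t := fun t =>
    htr t ▸ hVD t
  have hNewtonQ : ∀ t, deriv (deriv Q) t = -Complex.I * (tβ ‖Q t‖ : ℂ) * deriv Q t := by
    intro t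
    rw [hderivQ]
    exact (hVD'' t).deriv
  have hdVcont : Continuous (deriv V) := by
    have hdV : deriv V = fun t => -Complex.I * (tβ ‖Q t‖ : ℂ) * V t :=
      funext fun t => (hVD'' t).deriv
    rw [hdV]
    exact (continuous_const.mul
      (Complex.continuous_ofReal.comp (htβcont.comp hQdiff.continuous.norm))).mul
      hVdiff.continuous
  have hQsmooth : ContDiff ℝ 2 Q := by
    rw [← one_add_one_eq_two, contDiff_succ_iff_deriv]
    refine ⟨hQdiff, by intro h; exact absurd h (by norm_num), ?_⟩
    rw [hderivQ, contDiff_one_iff_deriv]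
    exact ⟨hVdiff, hdVcont⟩
  -- confinement of Q
  have hQconf : ∀ t, 0 ≤ t → ‖Q t‖ < η₁ := by
    by_contra hcon
    push_neg at hcon
    obtain ⟨t₀, ht₀0, hge⟩ := hcon
    obtain ⟨t₁, ht₁pos, _, ht₁eq, _⟩ := reach Q hQdiff.continuous
      (by rw [hQ0, ← hr0def]; exact hr0ltη₁) t₀ ht₀0 hge
    refine main_step Q t₁ ht₁pos.le hQdiff (by rw [hderivQ]; exact hVdiff) ?_ hQ0
      (by rw [hderivQ, hV0]) ht₁eq
    intro s hs
    rw [hNewtonQ s, hgnorm]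
  -- assemble
  refine ⟨η₁, ⟨hη₁pos.le, hη₁lt1⟩, partA, Q, hQsmooth, hQ0, (by rw [hderivQ, hV0]), ?_⟩
  intro t ht
  have hlt := hQconf t ht
  refine ⟨?_, hlt⟩
  rw [hNewtonQ t, htβeq _ ⟨norm_nonneg _, le_trans hlt.le hη₁ltη₂.le⟩]
end

section
/- Let b be a radial magnetic field on the open unit disc and let q be a trajectory of b with q(0) ≠ 0. Set H₀ = ½‖q̇(0)‖², p_θ = det(q(0), q̇(0)) + G(‖q(0)‖) and V(r) = (p_θ − G(r))²/(2r²). Then for every t in the domain of q with q(t) ≠ 0, writing r(t) = ‖q(t)‖, one has the reduced energy conservation ½ ṙ(t)² + V(r(t)) = H₀. -/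
open Filter MeasureTheory Set

private lemma hasDerivAt_cre {f : ℝ → ℂ} {f' : ℂ} {x : ℝ} (h : HasDerivAt f f' x) :
    HasDerivAt (fun t => (f t).re) f'.re x := by
  exact (Complex.reCLM.hasFDerivAt.comp_hasDerivAt x h)

private lemma hasDerivAt_cim {f : ℝ → ℂ} {f' : ℂ} {x : ℝ} (h : HasDerivAt f f' x) :
    HasDerivAt (fun t => (f t).im) f'.im x := by
  exact (Complex.imCLM.hasFDerivAt.comp_hasDerivAt x h)

private lemma normSq_eq' (z : ℂ) : ‖z‖ ^ 2 = z.re ^ 2 + z.im ^ 2 := by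
  rw [← Complex.normSq_eq_norm_sq, Complex.normSq_apply]; ring

private lemma key2 {A D E r : ℝ} (hr : r ≠ 0) (h : D ^ 2 + A ^ 2 = r ^ 2 * E) :
    (1 / (2 * r) * (2 * D)) ^ 2 / 2 + A ^ 2 / (2 * r ^ 2) = E / 2 := by
  field_simp
  linear_combination h

private lemma constOn {f : ℝ → ℝ} {I : Set ℝ} (hI : I.OrdConnected) (h0 : (0:ℝ) ∈ I)
    (hf : ∀ s ∈ I, HasDerivAt f 0 s) : ∀ t ∈ I, f t = f 0 := by
  intro t ht
  rcases le_total 0 t with h | h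
  · exact constant_of_has_deriv_right_zero
      (fun s hs => (hf s (hI.out h0 ht hs)).continuousAt.continuousWithinAt)
      (fun s hs => (hf s (hI.out h0 ht (Ico_subset_Icc_self hs))).hasDerivWithinAt)
      t (right_mem_Icc.mpr h)
  · exact (constant_of_has_deriv_right_zero
      (fun s hs => (hf s (hI.out ht h0 hs)).continuousAt.continuousWithinAt)
      (fun s hs => (hf s (hI.out ht h0 (Ico_subset_Icc_self hs))).hasDerivWithinAt)
      0 (right_mem_Icc.mpr h)).symm

/-- Let `b(q) = β(‖q‖)` be a radial magnetic field on the open unit disc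
(`β` locally Lipschitz on `[0,1)`), `G(r) = ∫₀^r τβ(τ)dτ`, and let `q` be a trajectory
of `b` (a `C²` solution of `q̈ = −i·b(q)·q̇`) with `q(0) ≠ 0`. Set `H₀ = ½‖q̇(0)‖²`,
`p_θ = det(q(0),q̇(0)) + G(‖q(0)‖)` and `V(r) = (p_θ − G(r))²/(2r²)`. Then for every `t`
in the domain with `q(t) ≠ 0`, writing `r(t) = ‖q(t)‖`, one has `½ṙ(t)² + V(r(t)) = H₀`. -/
theorem reduced_energy_conservation
    (β : ℝ → ℝ)
    (hβ : ∀ x ∈ Set.Ico (0:ℝ) 1, ∃ K : NNReal,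
      ∃ u ∈ nhdsWithin x (Set.Ico (0:ℝ) 1), LipschitzOnWith K β u)
    (G : ℝ → ℝ) (hG : ∀ r, G r = ∫ τ in (0:ℝ)..r, τ * β τ)
    (I : Set ℝ) (hI : I.OrdConnected) (h0I : (0:ℝ) ∈ I)
    (q : ℝ → ℂ) (hq : ContDiff ℝ 2 q)
    (hmem : ∀ t ∈ I, ‖q t‖ < 1)
    (hNewton : ∀ t ∈ I, deriv (deriv q) t = -Complex.I * (β ‖q t‖ : ℂ) * deriv q t)
    (h0 : q 0 ≠ 0)
    (H₀ pθ : ℝ) (hH0 : H₀ = ‖deriv q 0‖ ^ 2 / 2)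
    (hpθ : pθ = det2 (q 0) (deriv q 0) + G ‖q 0‖)
    (V : ℝ → ℝ) (hV : ∀ r, V r = (pθ - G r) ^ 2 / (2 * r ^ 2)) :
    ∀ t ∈ I, q t ≠ 0 →
      (deriv (fun τ => ‖q τ‖) t) ^ 2 / 2 + V ‖q t‖ = H₀ := by
  -- continuity of β on [0,1)
  have hβc : ContinuousOn β (Set.Ico (0:ℝ) 1) := by
    intro x hx
    obtain ⟨K, u, hu, hlip⟩ := hβ x hx
    exact (hlip.continuousOn x (mem_of_mem_nhdsWithin hx hu)).mono_of_mem_nhdsWithin hu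
  set ψ : ℝ → ℝ := fun u => β (Real.sqrt u) with hψdef
  have hψc : ContinuousOn ψ (Set.Iio (1:ℝ)) := by
    apply hβc.comp Real.continuous_sqrt.continuousOn
    intro u hu
    exact ⟨Real.sqrt_nonneg u, (Real.sqrt_lt' one_pos).2 (by simpa using hu)⟩
  set Φ : ℝ → ℝ := fun y => ∫ u in (0:ℝ)..y, ψ u with hΦdef
  have hFTC : ∀ x : ℝ, x < 1 → HasDerivAt Φ (ψ x) x := by
    intro x hx
    have hsubset : uIcc (0:ℝ) x ⊆ Iio 1 := by
      intro y hy
      rcases mem_uIcc.mp hy with h | h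
      · exact lt_of_le_of_lt h.2 hx
      · exact lt_of_le_of_lt h.2 one_pos
    exact intervalIntegral.integral_hasDerivAt_right
      ((hψc.mono hsubset).intervalIntegrable)
      (ContinuousOn.stronglyMeasurableAtFilter isOpen_Iio hψc x hx)
      (hψc.continuousAt (Iio_mem_nhds hx))
  -- substitution: Φ (r^2) = 2 * G r  for 0 ≤ r < 1
  have key : ∀ r : ℝ, 0 ≤ r → r < 1 → Φ (r ^ 2) = 2 * G r := by
    intro r h0r h1r
    have himg : ((fun x : ℝ => x ^ 2) '' uIcc 0 r) ⊆ Iio 1 := by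
      rintro y ⟨x, hx, rfl⟩
      rw [uIcc_of_le h0r] at hx
      have h1 := hx.1; have h2 := hx.2
      simp only [mem_Iio]
      nlinarith
    have hsub := intervalIntegral.integral_comp_smul_deriv' (a := (0:ℝ)) (b := r)
      (f := fun x => x ^ 2) (f' := fun x => 2 * x) (g := ψ)
      (fun x _ => by simpa using hasDerivAt_pow 2 x)
      ((continuous_const.mul continuous_id).continuousOn)
      (hψc.mono himg)
    simp only [Function.comp, zero_pow, smul_eq_mul] at hsub
    have hcongr : (∫ x in (0:ℝ)..r, 2 * x * ψ (x ^ 2)) = ∫ x in (0:ℝ)..r, 2 * (x * β x) := by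
      apply intervalIntegral.integral_congr
      intro x hx
      rw [uIcc_of_le h0r] at hx
      simp only [hψdef]
      rw [Real.sqrt_sq hx.1]; ring
    norm_num at hsub
    have : Φ (r ^ 2) = ∫ x in (0:ℝ)..r, 2 * (x * β x) := by
      show (∫ u in (0:ℝ)..(r^2), ψ u) = _
      rw [← hsub, hcongr]
    rw [this, intervalIntegral.integral_const_mul, hG]
  -- regularity of q
  have hq2 : ContDiff ℝ (1 + 1) q := by rw [one_add_one_eq_two]; exact hq
  obtain ⟨hqdiff, -, hqd⟩ := contDiff_succ_iff_deriv.mp hq2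
  have hqd' : Differentiable ℝ (deriv q) := hqd.differentiable (by norm_num)
  -- Newton's equation in components
  have hNre : ∀ s ∈ I, (deriv (deriv q) s).re = β ‖q s‖ * (deriv q s).im := by
    intro s hs
    rw [hNewton s hs]
    simp [Complex.mul_re, Complex.mul_im]
  have hNim : ∀ s ∈ I, (deriv (deriv q) s).im = -(β ‖q s‖ * (deriv q s).re) := by
    intro s hs
    rw [hNewton s hs]
    simp [Complex.mul_re, Complex.mul_im]
  -- the squared-norm function
  set n : ℝ → ℝ := fun τ => (q τ).re ^ 2 + (q τ).im ^ 2 with hndef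
  have hnval : ∀ τ, n τ = ‖q τ‖ ^ 2 := fun τ => (normSq_eq' (q τ)).symm
  have hnder : ∀ s : ℝ, HasDerivAt n
      (2 * (q s).re ^ 1 * (deriv q s).re + 2 * (q s).im ^ 1 * (deriv q s).im) s := by
    intro s
    have hqs : HasDerivAt q (deriv q s) s := (hqdiff s).hasDerivAt
    exact ((hasDerivAt_cre hqs).pow 2).add ((hasDerivAt_cim hqs).pow 2)
  -- energy conservation
  set E : ℝ → ℝ := fun τ => (deriv q τ).re ^ 2 + (deriv q τ).im ^ 2 with hEdef
  have hEconst : ∀ t ∈ I, E t = E 0 := by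
    refine constOn hI h0I ?_
    intro s hs
    have hq's : HasDerivAt (deriv q) (deriv (deriv q) s) s := (hqd' s).hasDerivAt
    have h := ((hasDerivAt_cre hq's).pow 2).add ((hasDerivAt_cim hq's).pow 2)
    convert h using 1
    · rfl
    · rfl
    · rfl
    rw [hNre s hs, hNim s hs]; ring
  -- angular momentum conservation
  set L : ℝ → ℝ := fun τ =>
    ((q τ).re * (deriv q τ).im - (q τ).im * (deriv q τ).re) + Φ (n τ) / 2 with hLdef
  have hLconst : ∀ t ∈ I, L t = L 0 := by
    refine constOn hI h0I ?_
    intro s hs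
    have hqs : HasDerivAt q (deriv q s) s := (hqdiff s).hasDerivAt
    have hq's : HasDerivAt (deriv q) (deriv (deriv q) s) s := (hqd' s).hasDerivAt
    have hns : n s < 1 := by
      rw [hnval]
      have h1 := hmem s hs
      nlinarith [norm_nonneg (q s)]
    have hΦn : HasDerivAt (fun τ => Φ (n τ))
        (ψ (n s) * (2 * (q s).re ^ 1 * (deriv q s).re + 2 * (q s).im ^ 1 * (deriv q s).im)) s :=
      (hFTC (n s) hns).comp s (hnder s)
    have hA : HasDerivAt (fun τ => (q τ).re * (deriv q τ).im - (q τ).im * (deriv q τ).re)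
        (((deriv q s).re * (deriv q s).im + (q s).re * (deriv (deriv q) s).im) -
         ((deriv q s).im * (deriv q s).re + (q s).im * (deriv (deriv q) s).re)) s :=
      ((hasDerivAt_cre hqs).mul (hasDerivAt_cim hq's)).sub
        ((hasDerivAt_cim hqs).mul (hasDerivAt_cre hq's))
    have h := hA.add (hΦn.div_const 2)
    convert h using 1
    · rfl
    · rfl
    · rfl
    have hψval : ψ (n s) = β ‖q s‖ := by
      simp only [hψdef]
      rw [hnval, Real.sqrt_sq (norm_nonneg _)]
    rw [hNre s hs, hNim s hs, hψval]; ring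
  -- conclusion
  intro t ht hqt
  have hr0 : (0:ℝ) < ‖q t‖ := norm_pos_iff.mpr hqt
  have hrne : ‖q t‖ ≠ 0 := ne_of_gt hr0
  have hntpos : n t ≠ 0 := by rw [hnval]; positivity
  -- derivative of the radius
  have hst : Real.sqrt (n t) = ‖q t‖ := by rw [hnval, Real.sqrt_sq (norm_nonneg _)]
  have hnormfun : (fun τ => ‖q τ‖) = fun τ => Real.sqrt (n τ) := by
    funext τ; rw [hnval, Real.sqrt_sq (norm_nonneg _)]
  have hnorm : HasDerivAt (fun τ => ‖q τ‖)
      (1 / (2 * Real.sqrt (n t)) *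
        (2 * (q t).re ^ 1 * (deriv q t).re + 2 * (q t).im ^ 1 * (deriv q t).im)) t := by
    rw [hnormfun]
    exact (Real.hasDerivAt_sqrt hntpos).comp t (hnder t)
  have hderiv := hnorm.deriv
  -- use the conservation laws
  have hE := hEconst t ht
  have hL := hLconst t ht
  have hΦt : Φ (n t) = 2 * G ‖q t‖ := by
    rw [hnval]; exact key _ (norm_nonneg _) (hmem t ht)
  have hΦ0 : Φ (n 0) = 2 * G ‖q 0‖ := by
    rw [hnval]; exact key _ (norm_nonneg _) (hmem 0 h0I)
  have hAt : (q t).re * (deriv q t).im - (q t).im * (deriv q t).re = pθ - G ‖q t‖ := by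
    have := hL
    simp only [hLdef] at this
    rw [hΦt, hΦ0] at this
    rw [hpθ]
    simp only [det2]
    linarith
  have hr2 : (q t).re ^ 2 + (q t).im ^ 2 = ‖q t‖ ^ 2 := by
    have := hnval t; simpa [hndef] using this
  have hH0' : H₀ = ((deriv q t).re ^ 2 + (deriv q t).im ^ 2) / 2 := by
    rw [hH0, normSq_eq']
    have := hE
    simp only [hEdef] at this
    linarith
  rw [hderiv, hV, hst, hH0', ← hAt]
  have hS : (2 * (q t).re ^ 1 * (deriv q t).re + 2 * (q t).im ^ 1 * (deriv q t).im)
      = 2 * ((q t).re * (deriv q t).re + (q t).im * (deriv q t).im) := by ring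
  rw [hS]
  have h3 : ((q t).re * (deriv q t).re + (q t).im * (deriv q t).im) ^ 2 +
      ((q t).re * (deriv q t).im - (q t).im * (deriv q t).re) ^ 2
      = ‖q t‖ ^ 2 * ((deriv q t).re ^ 2 + (deriv q t).im ^ 2) := by
    rw [← hr2]; ring
  exact key2 hrne h3
end
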